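/- Let A, B, T be real numbers with 0 < A < B and T > 0, and set k = (B−A)/T, 𝒯 = T/(AB), and l(t) = B − k·t. Suppose 0 < t₀ < t₁ < T and v₀ > k satisfy the collision relations v₀·(t₁ − t₀) = l(t₀) + l(t₁) and v₁ = v₀ + 2k. Define I(t,v) = 𝒯·(l(t)·v − k·l(t)) and θ(t) = (1/(2𝒯))·∫₀ᵗ l(s)⁻² ds. Then I(t₁,v₁) = I(t₀,v₀) and θ(t₁) = θ(t₀) + 1/I(t₀,v₀). -/

import Mathlib

open MeasureTheory intervalIntegral

set_option maxHeartbeats 1000000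

/-- Adiabatic coordinates lemma for the piecewise linear Fermi–Ulam accelerator:
the adiabatic momentum `I` is preserved and the adiabatic time `θ` advances by `1/I`
between consecutive collisions during the linear phase `l(t) = B - k t`. -/
theorem adiabatic_coordinates
    (A B T : ℝ) (hA : 0 < A) (hAB : A < B) (hT : 0 < T)
    (k 𝒯 : ℝ) (hk : k = (B - A) / T) (h𝒯 : 𝒯 = T / (A * B))
    (l : ℝ → ℝ) (hl : ∀ t, l t = B - k * t)
    (t₀ t₁ v₀ v₁ : ℝ)
    (ht₀ : 0 < t₀) (ht₀₁ : t₀ < t₁) (ht₁ : t₁ < T)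
    (hv₀ : v₀ > k)
    (hcoll : v₀ * (t₁ - t₀) = l t₀ + l t₁)
    (hv₁ : v₁ = v₀ + 2 * k)
    (I : ℝ → ℝ → ℝ) (hI : ∀ t v, I t v = 𝒯 * (l t * v - k * l t))
    (θ : ℝ → ℝ) (hθ : ∀ t, θ t = (1 / (2 * 𝒯)) * ∫ s in (0:ℝ)..t, ((l s) ^ 2)⁻¹) :
    I t₁ v₁ = I t₀ v₀ ∧ θ t₁ = θ t₀ + 1 / I t₀ v₀ := by
  have hB : 0 < B := hA.trans hAB
  have hkpos : 0 < k := by rw [hk]; exact div_pos (by linarith) hT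
  have h𝒯pos : 0 < 𝒯 := by rw [h𝒯]; positivity
  have hkT : k * T = B - A := by rw [hk]; field_simp
  have hlpos : ∀ s ∈ Set.Icc (0:ℝ) T, 0 < l s := by
    intro s hs
    rw [hl]
    nlinarith [mul_le_mul_of_nonneg_left hs.2 hkpos.le]
  have hcoll' : v₀ * (t₁ - t₀) = (B - k * t₀) + (B - k * t₁) := by
    rw [← hl, ← hl]; exact hcoll
  have hl0 : 0 < l t₀ := hlpos t₀ ⟨ht₀.le, (ht₀₁.trans ht₁).le⟩
  have hl1 : 0 < l t₁ := hlpos t₁ ⟨(ht₀.trans ht₀₁).le, ht₁.le⟩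
  constructor
  · rw [hI, hI, hl, hl, hv₁]
    linear_combination (-(𝒯 * k)) * hcoll'
  · -- integrability / continuity
    have hcont : ∀ a b : ℝ, Set.uIcc a b ⊆ Set.Icc (0:ℝ) T →
        IntervalIntegrable (fun s => ((l s) ^ 2)⁻¹) volume a b := by
      intro a b hsub
      apply ContinuousOn.intervalIntegrable
      apply ContinuousOn.inv₀
      · apply Continuous.continuousOn
        have : Continuous l := by
          have : l = fun t => B - k * t := funext hl
          rw [this]; continuity
        continuity
      · intro x hx
        exact pow_ne_zero 2 (hlpos x (hsub hx)).ne'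
    have hsub01 : Set.uIcc (0:ℝ) t₁ ⊆ Set.Icc (0:ℝ) T := by
      rw [Set.uIcc_of_le (by linarith)]
      exact Set.Icc_subset_Icc le_rfl (by linarith)
    have hsub00 : Set.uIcc (0:ℝ) t₀ ⊆ Set.Icc (0:ℝ) T := by
      rw [Set.uIcc_of_le (by linarith)]
      exact Set.Icc_subset_Icc le_rfl (by linarith)
    have hsub1 : Set.uIcc t₀ t₁ ⊆ Set.Icc (0:ℝ) T := by
      rw [Set.uIcc_of_le (by linarith)]
      exact Set.Icc_subset_Icc (by linarith) (by linarith)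
    -- split the integral
    have hsplit : (∫ s in (0:ℝ)..t₁, ((l s) ^ 2)⁻¹)
        = (∫ s in (0:ℝ)..t₀, ((l s) ^ 2)⁻¹) + ∫ s in t₀..t₁, ((l s) ^ 2)⁻¹ :=
      (integral_add_adjacent_intervals (hcont 0 t₀ hsub00) (hcont t₀ t₁ hsub1)).symm
    -- FTC on [t₀, t₁]
    have hftc : (∫ s in t₀..t₁, ((l s) ^ 2)⁻¹)
        = (k * l t₁)⁻¹ - (k * l t₀)⁻¹ := by
      have := intervalIntegral.integral_eq_sub_of_hasDerivAt
        (f := fun s => (k * (B - k * s))⁻¹) (f' := fun s => ((l s) ^ 2)⁻¹)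
        (a := t₀) (b := t₁)
        (fun x hx => by
          have hlx : 0 < l x := hlpos x (hsub1 hx)
          have hlx' : B - k * x ≠ 0 := by rw [← hl]; exact hlx.ne'
          have h1 : HasDerivAt (fun s : ℝ => k * (B - k * s)) (k * -(k * 1)) x :=
            (((hasDerivAt_id x).const_mul k).const_sub B).const_mul k
          have h2 := h1.inv (by positivity)
          convert h2 using 1
          show (l x ^ 2)⁻¹ = _
          rw [hl x]
          field_simp
          rfl
          rfl)
        (hcont t₀ t₁ hsub1)
      rw [this, hl, hl]
    have hIne : I t₀ v₀ ≠ 0 := by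
      rw [hI]
      have : 0 < 𝒯 * (l t₀ * v₀ - k * l t₀) := by
        apply mul_pos h𝒯pos
        nlinarith
      exact this.ne'
    have hlt : l t₁ = l t₀ - k * (t₁ - t₀) := by rw [hl, hl]; ring
    have hkey : (t₁ - t₀) * (v₀ - k) = 2 * l t₁ := by linear_combination hcoll - hlt
    have heq : 1 / (2 * 𝒯) * ((k * l t₁)⁻¹ - (k * l t₀)⁻¹)
        = 1 / (𝒯 * (l t₀ * v₀ - k * l t₀)) := by
      have hne : l t₀ * v₀ - k * l t₀ ≠ 0 := by nlinarith
      field_simp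
      rw [eq_div_iff (sub_ne_zero.mpr hv₀.ne')]
      linear_combination (-(v₀ - k)) * hlt + k * hkey
    rw [hθ, hθ, hsplit, hftc, hI, mul_add, heq]
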